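/- Let n_a, n_b, n_c ≥ 0 and equip the vertex set of the opposite quiver Q(n_a, n_b, n_c)^{op} with any linear order ≤. Then for every vertex i there is at most one right-minimal directed path in Q(n_a, n_b, n_c)^{op} with source i; in particular, Condition (2) holds for (Q(n_a, n_b, n_c)^{op}, ≤). -/

import Mathlib

/-- The vertex set of the quiver `Q(n_a, n_b, n_c)`: vertices `a 0, …, a n_a`,
`b 0, …, b (n_b - 1)` (representing `b_1, …, b_{n_b}`) and
`c 0, …, c (n_c - 1)` (representing `c_1, …, c_{n_c}`). -/
inductive QV (na nb nc : ℕ) : Type where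
  | a : Fin (na + 1) → QV na nb nc
  | b : Fin nb → QV na nb nc
  | c : Fin nc → QV na nb nc

/-- The arrow relation of `Q(n_a, n_b, n_c)`: arrows `a_i → a_{i-1}`, `a_0 → b_1`,
`b_i → b_{i+1}`, `a_0 → c_1`, `c_i → c_{i+1}`. -/
def qrel {na nb nc : ℕ} : QV na nb nc → QV na nb nc → Prop
  | .a i, .a j => (i : ℕ) = (j : ℕ) + 1
  | .a i, .b j => (i : ℕ) = 0 ∧ (j : ℕ) = 0
  | .a i, .c j => (i : ℕ) = 0 ∧ (j : ℕ) = 0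
  | .b i, .b j => (j : ℕ) = (i : ℕ) + 1
  | .c i, .c j => (j : ℕ) = (i : ℕ) + 1
  | _, _ => False

/-- The opposite quiver `Q(n_a, n_b, n_c)ᵒᵖ`, obtained by reversing all arrows of
`Q(n_a, n_b, n_c)`. -/
instance {na nb nc : ℕ} : Quiver (QV na nb nc) :=
  ⟨fun u v => PLift (qrel v u)⟩

open Quiver

/-- The path `p` passes through the vertex `k`. -/
def PassesThrough {V : Type*} [Quiver V] {a b : V} (p : Path a b) (k : V) : Prop :=
  ∃ (v : Path a k) (u : Path k b), v.comp u = p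

/-- `k` is an inner vertex of `p`. -/
def IsInnerVertex {V : Type*} [Quiver V] {a b : V} (p : Path a b) (k : V) : Prop :=
  ∃ (v : Path a k) (u : Path k b), v.length ≠ 0 ∧ u.length ≠ 0 ∧ v.comp u = p

/-- A nontrivial path `p : i → j` is right-minimal directed if `i < j` and every inner
vertex `k` of `p` satisfies `k ≤ i`. -/
def IsRMD {V : Type*} [Quiver V] [LinearOrder V] {i j : V} (p : Path i j) : Prop :=
  p.length ≠ 0 ∧ i < j ∧ ∀ k, IsInnerVertex p k → k ≤ i

/-- Condition (1): for all paths `p : i → k` and `q : j → k` with `i < k < j` such that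
every vertex passed through by `p` is `≤ k`, there is a path `r : j → i` with `q = p ∘ r`. -/
def Cond1 (V : Type*) [Quiver V] [LinearOrder V] : Prop :=
  ∀ (i k j : V) (p : Path i k) (q : Path j k),
    i < k → k < j → (∀ m, PassesThrough p m → m ≤ k) →
    ∃ r : Path j i, r.comp p = q

/-- Condition (2): for every path `q : j → i` with `i < j`, there is at most one
right-minimal directed path `p` with source `i` and target `< j`. -/
def Cond2 (V : Type*) [Quiver V] [LinearOrder V] : Prop :=
  ∀ i j : V, i < j → Nonempty (Path j i) →
    ∀ (k k' : V) (p : Path i k) (p' : Path i k'),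
      IsRMD p → IsRMD p' → k < j → k' < j → k = k' ∧ HEq p p' 

/-- Every vertex of `Q(n_a, n_b, n_c)ᵒᵖ` has at most one outgoing arrow. -/
lemma hom_unique {na nb nc : ℕ} {u v w : QV na nb nc} (e : u ⟶ v) (f : u ⟶ w) :
    v = w := by
  have he := e.down
  have hf := f.down
  cases u <;> cases v <;> cases w <;>
    simp only [qrel] at he hf <;>
    first
      | (exact congrArg _ (Fin.ext (by omega)))
      | omega

/-- Paths in `Q(n_a, n_b, n_c)ᵒᵖ` with the same source and the same length coincide. -/
lemma path_eq_of_length_eq {na nb nc : ℕ} {i : QV na nb nc} :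
    ∀ {k : QV na nb nc} (p : Path i k) {k' : QV na nb nc} (p' : Path i k'),
      p.length = p'.length → k = k' ∧ HEq p p' := by
  intro k p
  induction p with
  | nil =>
    intro k' p' h
    cases p' with
    | nil => exact ⟨rfl, HEq.rfl⟩
    | cons q' e' => simp [Quiver.Path.length] at h
  | cons q e ih =>
    intro k' p' h
    cases p' with
    | nil => simp [Quiver.Path.length] at h
    | cons q' e' =>
      simp only [Quiver.Path.length_cons, Nat.add_right_cancel_iff] at h
      obtain ⟨h1, h2⟩ := ih q' h
      subst h1
      have hq : q = q' := eq_of_heq h2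
      subst hq
      have hk := hom_unique e e'
      subst hk
      have he : e = e' := by change PLift _ at e e'; cases e; cases e'; rfl
      subst he
      exact ⟨rfl, HEq.rfl⟩

/-- A shorter path from the same source is a prefix. -/
lemma path_prefix {na nb nc : ℕ} {i : QV na nb nc} :
    ∀ {k' : QV na nb nc} (p' : Path i k') {k : QV na nb nc} (p : Path i k),
      p.length < p'.length →
      ∃ u : Path k k', u.length ≠ 0 ∧ p.comp u = p' := by
  intro k' p'
  induction p' with
  | nil => intro k p h; simp [Quiver.Path.length] at h
  | cons q' e' ih =>
    intro k p h
    simp only [Quiver.Path.length_cons] at h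
    rcases Nat.lt_or_ge p.length q'.length with hlt | hge
    · obtain ⟨u, hu0, hu⟩ := ih p hlt
      exact ⟨u.cons e', by simp [Quiver.Path.length], by rw [← hu]; rfl⟩
    · have heq : p.length = q'.length := by omega
      obtain ⟨h1, h2⟩ := path_eq_of_length_eq p q' heq
      subst h1
      have hp : p = q' := eq_of_heq h2
      subst hp
      exact ⟨(Quiver.Path.nil).cons e', by simp [Quiver.Path.length], rfl⟩

lemma rmd_unique {na nb nc : ℕ} [LinearOrder (QV na nb nc)] :
    ∀ (i : QV na nb nc) (k k' : QV na nb nc)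
      (p : Path i k) (p' : Path i k'),
      IsRMD p → IsRMD p' → k = k' ∧ HEq p p' := by
  have key : ∀ (i k k' : QV na nb nc) (p : Path i k) (p' : Path i k'),
      IsRMD p → IsRMD p' → p.length ≤ p'.length → k = k' ∧ HEq p p' := by
    intro i k k' p p' hp hp' hle
    rcases Nat.lt_or_ge p.length p'.length with hlt | hge
    · obtain ⟨u, hu0, hu⟩ := path_prefix p' p hlt
      have hk : k ≤ i := hp'.2.2 k ⟨p, u, hp.1, hu0, hu⟩
      exact absurd hp.2.1 (not_lt.mpr hk)
    · exact path_eq_of_length_eq p p' (by omega)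
  intro i k k' p p' hp hp'
  rcases le_total p.length p'.length with h | h
  · exact key i k k' p p' hp hp' h
  · obtain ⟨h1, h2⟩ := key i k' k p' p hp' hp h
    exact ⟨h1.symm, h2.symm⟩

/-- In `Q(n_a, n_b, n_c)ᵒᵖ`, for any linear order on the vertices, every vertex is the
source of at most one right-minimal directed path; in particular Condition (2) holds. -/
theorem stmt_13 (na nb nc : ℕ) [LinearOrder (QV na nb nc)] :
    (∀ (i : QV na nb nc) (k k' : QV na nb nc)
        (p : Path i k) (p' : Path i k'),
        IsRMD p → IsRMD p' → k = k' ∧ HEq p p') ∧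
      Cond2 (QV na nb nc) := by
  have hr := @rmd_unique na nb nc _
  exact ⟨hr, fun i j _ _ k k' p p' hp hp' _ _ => hr i k k' p p' hp hp'⟩
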